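/- The number of k-cliques in G_k^{μ,υ}(X) equals (n/3)^{k−3} times the number of triangles in G_3^{μ,υ}(X). Both counts equal |{(i,j) : μ_i = 1, υ_j = 1, X_{i,j} = 1}| multiplied by (n/3)^{k−2} and n/3 respectively. -/

import Mathlib

/-- The gadget graph `G_k^{μ,υ}(X)` with vertex parts `U`, `Y`, `W_1, …, W_{k−2}`, each of
size `m = n/3`. Vertices: `inl i = u_i`, `inr (inl j) = y_j`, `inr (inr (p, j)) = w_{p,j}`. -/
def gadget (k m : ℕ) (μ υ : Fin m → Bool) (X : Fin m → Fin m → Bool) :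
    SimpleGraph (Fin m ⊕ Fin m ⊕ Fin (k - 2) × Fin m) where
  Adj a b :=
    match a, b with
    | .inl i, .inr (.inl j) => X i j = true
    | .inr (.inl j), .inl i => X i j = true
    | .inl i, .inr (.inr _) => μ i = true
    | .inr (.inr _), .inl i => μ i = true
    | .inr (.inl i), .inr (.inr _) => υ i = true
    | .inr (.inr _), .inr (.inl i) => υ i = true
    | .inr (.inr (p, _)), .inr (.inr (q, _)) => p ≠ q
    | _, _ => False
  symm := by
    constructor
    rintro (i | j | ⟨p, w⟩) (i' | j' | ⟨p', w'⟩) h <;> simp_all <;> exact Ne.symm h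
  loopless := by
    constructor
    rintro (i | j | ⟨p, w⟩) h <;> simp_all

section Aux

variable {k m : ℕ} {μ υ : Fin m → Bool} {X : Fin m → Fin m → Bool}

def gsetF (k : ℕ) (i j : Fin m) (f : Fin (k - 2) → Fin m) :
    Finset (Fin m ⊕ Fin m ⊕ Fin (k - 2) × Fin m) :=
  insert (.inl i) (insert (.inr (.inl j))
    (Finset.univ.image fun p => Sum.inr (Sum.inr (p, f p))))

lemma mem_gsetF {i j : Fin m} {f : Fin (k - 2) → Fin m}
    {x : Fin m ⊕ Fin m ⊕ Fin (k - 2) × Fin m} :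
    x ∈ gsetF k i j f ↔
      x = .inl i ∨ x = .inr (.inl j) ∨ ∃ p, x = .inr (.inr (p, f p)) := by
  simp [gsetF, eq_comm]

lemma card_gsetF (hk : 2 ≤ k) (i j : Fin m) (f : Fin (k - 2) → Fin m) :
    (gsetF k i j f).card = k := by
  rw [gsetF, Finset.card_insert_of_notMem (by simp),
    Finset.card_insert_of_notMem (by simp),
    Finset.card_image_of_injective _ (fun p q h => by simp only [Sum.inr.injEq, Prod.mk.injEq] at h; exact h.1),
    Finset.card_univ, Fintype.card_fin]
  omega

lemma isNClique_gsetF (hk : 3 ≤ k) {i j : Fin m} {f : Fin (k - 2) → Fin m}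
    (hμ : μ i = true) (hυ : υ j = true) (hX : X i j = true) :
    (gadget k m μ υ X).IsNClique k (gsetF k i j f) := by
  constructor
  · intro a ha b hb hab
    rw [Finset.mem_coe, mem_gsetF] at ha hb
    rcases ha with rfl | rfl | ⟨p, rfl⟩ <;> rcases hb with rfl | rfl | ⟨q, rfl⟩
    · exact absurd rfl hab
    · exact hX
    · exact hμ
    · exact hX
    · exact absurd rfl hab
    · exact hυ
    · exact hμ
    · exact hυ
    · exact fun hpq => hab (by rw [hpq])
  · exact card_gsetF (by omega) i j f

/-- part index -/
def part : Fin m ⊕ Fin m ⊕ Fin (k - 2) × Fin m → ℕ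
  | .inl _ => 0
  | .inr (.inl _) => 1
  | .inr (.inr (p, _)) => p.val + 2

lemma count_cliques (hk : 3 ≤ k) (μ υ : Fin m → Bool) (X : Fin m → Fin m → Bool) :
    Nat.card {S : Finset (Fin m ⊕ Fin m ⊕ Fin (k - 2) × Fin m) //
        (gadget k m μ υ X).IsNClique k S} =
      Nat.card {ij : Fin m × Fin m //
          μ ij.1 = true ∧ υ ij.2 = true ∧ X ij.1 ij.2 = true} * m ^ (k - 2) := by
  have hb : Function.Bijective
      (fun z : {ij : Fin m × Fin m //
          μ ij.1 = true ∧ υ ij.2 = true ∧ X ij.1 ij.2 = true} × (Fin (k - 2) → Fin m) =>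
        (⟨gsetF k z.1.1.1 z.1.1.2 z.2,
          isNClique_gsetF hk z.1.2.1 z.1.2.2.1 z.1.2.2.2⟩ :
          {S : Finset (Fin m ⊕ Fin m ⊕ Fin (k - 2) × Fin m) //
            (gadget k m μ υ X).IsNClique k S})) := by
    constructor
    · rintro ⟨⟨⟨i, j⟩, hij⟩, f⟩ ⟨⟨⟨i', j'⟩, hij'⟩, f'⟩ h
      have hS : gsetF k i j f = gsetF k i' j' f' := congrArg Subtype.val h
      have hi : (Sum.inl i : Fin m ⊕ Fin m ⊕ Fin (k - 2) × Fin m) ∈ gsetF k i' j' f' := by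
        rw [← hS, mem_gsetF]; left; rfl
      rw [mem_gsetF] at hi
      have hi2 : i = i' := by rcases hi with h1 | h1 | ⟨p, h1⟩ <;> simp_all
      have hj : (Sum.inr (Sum.inl j) : Fin m ⊕ Fin m ⊕ Fin (k - 2) × Fin m) ∈ gsetF k i' j' f' := by
        rw [← hS, mem_gsetF]; right; left; rfl
      rw [mem_gsetF] at hj
      have hj2 : j = j' := by rcases hj with h1 | h1 | ⟨p, h1⟩ <;> simp_all
      have hf : f = f' := by
        funext p
        have hp : (Sum.inr (Sum.inr (p, f p)) : Fin m ⊕ Fin m ⊕ Fin (k - 2) × Fin m) ∈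
            gsetF k i' j' f' := by rw [← hS, mem_gsetF]; exact Or.inr (Or.inr ⟨p, rfl⟩)
        rw [mem_gsetF] at hp
        rcases hp with h1 | h1 | ⟨q, h1⟩
        · exact absurd h1 (by simp)
        · exact absurd h1 (by simp)
        · have : (p, f p) = (q, f' q) := by
            exact Sum.inr_injective (Sum.inr_injective h1)
          obtain ⟨h2, h3⟩ := Prod.mk.injEq .. ▸ this
          rw [h3, ← h2]
      subst hi2; subst hj2; subst hf; rfl
    · rintro ⟨S, hclq, hcard⟩
      have hadj : ∀ a ∈ S, ∀ b ∈ S, a ≠ b → (gadget k m μ υ X).Adj a b :=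
        fun a ha b hb => hclq ha hb
      have hinj : Set.InjOn (part (k := k) (m := m)) S := by
        intro a ha b hb h
        by_contra hne
        have hAdj := hadj a ha b hb hne
        rcases a with i | j | ⟨p, x⟩ <;> rcases b with i' | j' | ⟨q, y⟩ <;>
          simp only [part] at h
        · exact hAdj
        · omega
        · omega
        · omega
        · exact hAdj
        · omega
        · omega
        · omega
        · exact hAdj (Fin.ext (by omega))
      have himg : S.image part = Finset.range k := by
        apply Finset.eq_of_subset_of_card_le
        · intro v hv
          simp only [Finset.mem_image] at hv
          obtain ⟨a, ha, rfl⟩ := hv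
          rcases a with i | j | ⟨p, x⟩ <;> simp only [part, Finset.mem_range] <;> [omega; omega; (have := p.isLt; omega)]
        · rw [Finset.card_image_of_injOn hinj, hcard, Finset.card_range]
      have hmem : ∀ v < k, ∃ a ∈ S, part a = v := by
        intro v hv
        have : v ∈ S.image part := himg ▸ Finset.mem_range.mpr hv
        simpa using this
      obtain ⟨a0, ha0, h0⟩ := hmem 0 (by omega)
      obtain ⟨i, rfl⟩ : ∃ i, a0 = Sum.inl i := by
        rcases a0 with i | j | ⟨p, x⟩
        · exact ⟨i, rfl⟩
        · simp [part] at h0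
        · simp [part] at h0
      obtain ⟨a1, ha1, h1⟩ := hmem 1 (by omega)
      obtain ⟨j, rfl⟩ : ∃ j, a1 = Sum.inr (Sum.inl j) := by
        rcases a1 with i' | j | ⟨p, x⟩
        · simp [part] at h1
        · exact ⟨j, rfl⟩
        · simp [part] at h1
      have hw : ∀ p : Fin (k - 2), ∃ x, Sum.inr (Sum.inr (p, x)) ∈ S := by
        intro p
        obtain ⟨a, ha, hπ⟩ := hmem (p.val + 2) (by have := p.isLt; omega)
        rcases a with i' | j' | ⟨q, x⟩
        · simp [part] at hπ
        · simp [part] at hπ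
        · simp only [part] at hπ
          have : q = p := Fin.ext (by omega)
          exact ⟨x, this ▸ ha⟩
      let f : Fin (k - 2) → Fin m := fun p => (hw p).choose
      have hwmem : ∀ p, Sum.inr (Sum.inr (p, f p)) ∈ S := fun p => (hw p).choose_spec
      have p0 : Fin (k - 2) := ⟨0, by omega⟩
      have hX : X i j = true := hadj _ ha0 _ ha1 (by simp)
      have hμ : μ i = true := hadj _ ha0 _ (hwmem p0) (by simp)
      have hυ : υ j = true := hadj _ ha1 _ (hwmem p0) (by simp)
      have hSeq : gsetF k i j f = S := by
        apply Finset.eq_of_subset_of_card_le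
        · intro x hx
          rw [mem_gsetF] at hx
          rcases hx with rfl | rfl | ⟨p, rfl⟩
          · exact ha0
          · exact ha1
          · exact hwmem p
        · rw [card_gsetF (by omega), hcard]
      exact ⟨⟨⟨(i, j), hμ, hυ, hX⟩, f⟩, Subtype.ext hSeq⟩
  rw [← Nat.card_eq_of_bijective _ hb, Nat.card_prod]
  congr 1
  simp [Nat.card_eq_fintype_card]

end Aux

theorem stmt10 (k m : ℕ) (hk : 3 ≤ k) (μ υ : Fin m → Bool) (X : Fin m → Fin m → Bool) :
    Nat.card {S : Finset (Fin m ⊕ Fin m ⊕ Fin (k - 2) × Fin m) //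
        (gadget k m μ υ X).IsNClique k S} =
      m ^ (k - 3) *
        Nat.card {S : Finset (Fin m ⊕ Fin m ⊕ Fin (3 - 2) × Fin m) //
          (gadget 3 m μ υ X).IsNClique 3 S} ∧
    Nat.card {S : Finset (Fin m ⊕ Fin m ⊕ Fin (k - 2) × Fin m) //
        (gadget k m μ υ X).IsNClique k S} =
      Nat.card {ij : Fin m × Fin m //
          μ ij.1 = true ∧ υ ij.2 = true ∧ X ij.1 ij.2 = true} * m ^ (k - 2) ∧
    Nat.card {S : Finset (Fin m ⊕ Fin m ⊕ Fin (3 - 2) × Fin m) //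
        (gadget 3 m μ υ X).IsNClique 3 S} =
      Nat.card {ij : Fin m × Fin m //
          μ ij.1 = true ∧ υ ij.2 = true ∧ X ij.1 ij.2 = true} * m := by
  have h3 := count_cliques (le_refl 3) μ υ X
  have hkk := count_cliques hk μ υ X
  have e : m ^ (3 - 2) = m := pow_one m
  have h3' := h3.trans (congrArg (Nat.card {ij : Fin m × Fin m //
      μ ij.1 = true ∧ υ ij.2 = true ∧ X ij.1 ij.2 = true} * ·) e)
  refine ⟨?_, hkk, h3'⟩
  rw [hkk, h3']
  have : k - 2 = (k - 3) + 1 := by omega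
  rw [this, pow_succ]
  ring
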